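/- Every Gauss code with at most two chords can be transformed into the empty code by a finite sequence of C1 and W moves. -/
import Mathlib


/-!
Gauss codes for welded knots.

A Gauss code is a cyclic word in which each chord label occurs exactly twice,
once as a tail (`isHead = false`) and once as a head (`isHead = true`), both
occurrences carrying the common sign of the chord.  We represent the cyclic
word by a linear list of entries, working up to rotation (`List.rotate`) and
injective relabelling of the chords.
-/

/-- An endpoint of a chord: `(chord label, isHead, sign)`, where `isHead = false`
means a tail (over-passing) endpoint and `isHead = true` a head (under-passing)
endpoint, and the sign `true`/`false` stands for `+1`/`-1`. -/
abbrev GEntry : Type := ℕ × Bool × Bool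

/-- A (linear representative of a cyclic) word of endpoints. -/
abbrev GWord : Type := List GEntry

/-- The set of chord labels occurring in a word. -/
def chordSet (w : GWord) : Set ℕ := {a | ∃ e ∈ w, e.1 = a}

/-- `w` is a Gauss code: every chord label that occurs in `w` occurs exactly
twice, once as a tail and once as a head, with a common sign. -/
def IsGaussCode (w : GWord) : Prop :=
  ∀ a ∈ chordSet w,
    w.countP (fun e => e.1 == a) = 2 ∧
    ∃ s : Bool, (a, false, s) ∈ w ∧ (a, true, s) ∈ w

/-- The crossing change at the set `S` of chords: at every chord of `S`, the
tail and head markings of its two occurrences are exchanged and its sign is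
reversed. -/
def crossingChange (S : Finset ℕ) (w : GWord) : GWord :=
  w.map fun e => if e.1 ∈ S then (e.1, !e.2.1, !e.2.2) else e

/-- Deletion of the chord `a` (both of its endpoints) from the word. -/
def deleteChord (a : ℕ) (w : GWord) : GWord :=
  w.filter fun e => e.1 != a

/-- Equality of words up to cyclic permutation. -/
def RotEq (w w' : GWord) : Prop := ∃ n : ℕ, w' = w.rotate n

/-- Renaming the chords of a word by `f`. -/
def relabelWord (f : ℕ → ℕ) (w : GWord) : GWord := w.map fun e => (f e.1, e.2)

/-- Equality of words up to cyclic permutation and (injective) renaming of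
the chords. -/
def CyclicRename (w w' : GWord) : Prop :=
  ∃ (n : ℕ) (f : ℕ → ℕ), Function.Injective f ∧ w' = relabelWord f (w.rotate n)

/-- Raw C1 move (deleting direction): deletion of a chord whose two endpoints
occupy adjacent positions; the inserting direction is the converse relation. -/
def C1delRaw (u v : GWord) : Prop :=
  ∃ (x y : GWord) (a : ℕ) (h s : Bool),
    (∀ e ∈ x ++ y, e.1 ≠ a) ∧
    u = x ++ (a, h, s) :: (a, !h, s) :: y ∧
    v = x ++ y

/-- Raw W move: interchange of two adjacent endpoints that are both tails
(of any two chords, regardless of signs). -/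
def WRaw (u v : GWord) : Prop :=
  ∃ (x y : GWord) (a b : ℕ) (s t : Bool),
    u = x ++ (a, false, s) :: (b, false, t) :: y ∧
    v = x ++ (b, false, t) :: (a, false, s) :: y

/-- Raw C2 move (deleting direction): deletion of a pair of chords of opposite
signs whose two tails occupy adjacent positions and whose two heads occupy
adjacent positions. -/
def C2delRaw (u v : GWord) : Prop :=
  ∃ (x y z : GWord) (a b : ℕ) (s : Bool),
    a ≠ b ∧
    (∀ e ∈ x ++ y ++ z, e.1 ≠ a ∧ e.1 ≠ b) ∧
    (u = x ++ (a, false, s) :: (b, false, !s) :: (y ++ (a, true, s) :: (b, true, !s) :: z) ∨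
     u = x ++ (a, false, s) :: (b, false, !s) :: (y ++ (b, true, !s) :: (a, true, s) :: z)) ∧
    v = x ++ y ++ z

/-- Raw C3 move: the Gauss-code translation of the planar Reidemeister move of
type 3.  Three strands `A`, `B`, `C` (modelled on the lines `y = -1`, `y = x`,
`y = -x` and their directions `(1,0)`, `(1,1)`, `(-1,1)`, possibly reversed
according to `dA`, `dB`, `dC`) meet pairwise in the chords `a = AB`, `b = AC`,
`c = BC`; `oAB`, `oAC`, `oBC` record which strand passes over in each pair and
must come from a linear height order.  The six endpoints form three adjacent
pairs, one on each strand, and the move exchanges the order within each pair;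
the head/tail pattern is determined by the heights and the signs by the heights
and the directions, as in a planar diagram. -/
def C3Raw (u v : GWord) : Prop :=
  ∃ (x y z t : GWord) (a b c : ℕ) (oAB oAC oBC dA dB dC swap : Bool),
    a ≠ b ∧ a ≠ c ∧ b ≠ c ∧
    (oAB = oBC → oAC = oAB) ∧
    (let sa : Bool := (dA == dB) == oAB
     let sb : Bool := (dA == dC) == oAC
     let sc : Bool := (dB == dC) == oBC
     let PA : GWord :=
       if dA then [(a, !oAB, sa), (b, !oAC, sb)] else [(b, !oAC, sb), (a, !oAB, sa)]
     let PB : GWord :=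
       if dB then [(a, oAB, sa), (c, !oBC, sc)] else [(c, !oBC, sc), (a, oAB, sa)]
     let PC : GWord :=
       if dC then [(b, oAC, sb), (c, oBC, sc)] else [(c, oBC, sc), (b, oAC, sb)]
     let Q1 : GWord := if swap then PC else PB
     let Q2 : GWord := if swap then PB else PC
     u = x ++ PA ++ y ++ Q1 ++ z ++ Q2 ++ t ∧
     v = x ++ PA.reverse ++ y ++ Q1.reverse ++ z ++ Q2.reverse ++ t)

/-- One welded Reidemeister move (C1, C2, C3 or W, in either direction),
performed up to cyclic permutation and renaming of chords. -/
def WeldedStep (u v : GWord) : Prop :=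
  ∃ u₀ v₀ : GWord, CyclicRename u u₀ ∧ CyclicRename v₀ v ∧
    (C1delRaw u₀ v₀ ∨ C1delRaw v₀ u₀ ∨ C2delRaw u₀ v₀ ∨ C2delRaw v₀ u₀ ∨
     C3Raw u₀ v₀ ∨ C3Raw v₀ u₀ ∨ WRaw u₀ v₀)

/-- Welded equivalence: two Gauss codes are welded-equivalent if they are
related by a finite sequence of C1, C2, C3 and W moves (on cyclic words). -/
def WeldedEquiv : GWord → GWord → Prop := Relation.EqvGen WeldedStep

/-- A Gauss code represents the trivial welded knot iff it is
welded-equivalent to the empty code. -/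
def RepresentsTrivial (w : GWord) : Prop := WeldedEquiv w []

/-- One C1 or W move (in either direction), up to cyclic permutation and
renaming of chords. -/
def CWStep (u v : GWord) : Prop :=
  ∃ u₀ v₀ : GWord, CyclicRename u u₀ ∧ CyclicRename v₀ v ∧
    (C1delRaw u₀ v₀ ∨ C1delRaw v₀ u₀ ∨ WRaw u₀ v₀)

/-- Relatedness by a finite sequence of C1 and W moves alone. -/
def CWEquiv : GWord → GWord → Prop := Relation.EqvGen CWStep

/-- One W move, up to cyclic permutation. -/
def WStepRot (u v : GWord) : Prop :=
  ∃ u₀ v₀ : GWord, RotEq u u₀ ∧ RotEq v₀ v ∧ WRaw u₀ v₀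

/-- One deleting C1 move, up to cyclic permutation. -/
def C1StepRot (u v : GWord) : Prop :=
  ∃ u₀ v₀ : GWord, RotEq u u₀ ∧ RotEq v₀ v ∧ C1delRaw u₀ v₀

/-- In the linear word `v`, no chord has its head occurring strictly before
its tail. -/
def TailsFirst (v : GWord) : Prop :=
  ¬ ∃ (x y z : GWord) (a : ℕ) (s s' : Bool),
      v = x ++ (a, true, s) :: (y ++ (a, false, s') :: z)

/-- A Gauss code is descending if the cyclic word can be cut at some point and
read in one of the two directions so that every chord's tail occurs before its
head. -/
def IsDescending (w : GWord) : Prop :=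
  ∃ n : ℕ, TailsFirst (w.rotate n) ∨ TailsFirst ((w.rotate n).reverse)

/-- `c(D)`: the minimal number of chords of a Gauss code representing the same
welded knot as `D`. -/
noncomputable def minCrossing (D : GWord) : ℕ :=
  sInf {n : ℕ | ∃ D' : GWord, IsGaussCode D' ∧ WeldedEquiv D D' ∧ (chordSet D').ncard = n}

/-- `u(D)`: the minimal cardinality of a set `S` of chords of `D` such that the
crossing change at `S` turns `D` into a Gauss code representing the trivial
welded knot. -/
noncomputable def unknottingNumWord (D : GWord) : ℕ :=
  sInf {k : ℕ | ∃ S : Finset ℕ, ↑S ⊆ chordSet D ∧ S.card = k ∧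
    WeldedEquiv (crossingChange S D) []}

/-- `u(K)`: the minimum of `u(D')` over all Gauss codes `D'` representing the
same welded knot as `D`. -/
noncomputable def unknottingNum (D : GWord) : ℕ :=
  sInf {k : ℕ | ∃ D' : GWord, IsGaussCode D' ∧ WeldedEquiv D D' ∧ unknottingNumWord D' = k}
lemma cyclicRename_refl (w : GWord) : CyclicRename w w :=
  ⟨0, id, Function.injective_id, by simp [relabelWord]⟩

lemma exists_fresh (w : GWord) : ∃ a : ℕ, ∀ e ∈ w, e.1 ≠ a := by
  refine ⟨(w.map Prod.fst).toFinset.sup id + 1, ?_⟩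
  intro e he h
  have h1 : e.1 ∈ (w.map Prod.fst).toFinset := by
    simp only [List.mem_toFinset, List.mem_map]; exact ⟨e, he, rfl⟩
  have := Finset.le_sup (f := id) h1
  simp only [id] at this; omega

lemma cw_c1 (x y : GWord) (a : ℕ) (h s : Bool) (ha : ∀ e ∈ x ++ y, e.1 ≠ a) :
    CWEquiv (x ++ (a,h,s) :: (a,!h,s) :: y) (x ++ y) :=
  Relation.EqvGen.rel _ _ ⟨_, _, cyclicRename_refl _, cyclicRename_refl _,
    Or.inl ⟨x, y, a, h, s, ha, rfl, rfl⟩⟩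

lemma cw_w (x y : GWord) (a b : ℕ) (s t : Bool) :
    CWEquiv (x ++ (a,false,s) :: (b,false,t) :: y) (x ++ (b,false,t) :: (a,false,s) :: y) :=
  Relation.EqvGen.rel _ _ ⟨_, _, cyclicRename_refl _, cyclicRename_refl _,
    Or.inr (Or.inr ⟨x, y, a, b, s, t, rfl, rfl⟩)⟩

lemma cw_of_rename {u v : GWord} (h : CyclicRename u v) : CWEquiv u v := by
  obtain ⟨a, ha⟩ := exists_fresh u
  have hraw : C1delRaw ((a,false,false) :: (a,true,false) :: u) u :=
    ⟨[], u, a, false, false, by simpa using ha, by simp, rfl⟩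
  have step1 : CWStep u ((a,false,false) :: (a,true,false) :: u) :=
    ⟨u, _, cyclicRename_refl _, cyclicRename_refl _, Or.inr (Or.inl hraw)⟩
  have step2 : CWStep ((a,false,false) :: (a,true,false) :: u) v :=
    ⟨_, u, cyclicRename_refl _, h, Or.inl hraw⟩
  exact Relation.EqvGen.trans _ _ _ (Relation.EqvGen.rel _ _ step1)
    (Relation.EqvGen.rel _ _ step2)

lemma cw_rot (w : GWord) (n : ℕ) : CWEquiv w (w.rotate n) :=
  cw_of_rename ⟨n, id, Function.injective_id, by simp [relabelWord]⟩

lemma cw_rot' {w r : GWord} (n : ℕ) (h : w.rotate n = r) : CWEquiv w r :=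
  h ▸ cw_rot w n

lemma cw_adj (a : ℕ) (h s : Bool) (rest : GWord) (ha : ∀ e ∈ rest, e.1 ≠ a) :
    CWEquiv ((a,h,s) :: (a,!h,s) :: rest) rest := by
  simpa using cw_c1 [] rest a h s (by simpa using ha)

lemma cw_trans {u v w : GWord} (h1 : CWEquiv u v) (h2 : CWEquiv v w) : CWEquiv u w :=
  Relation.EqvGen.trans _ _ _ h1 h2
lemma rot3 (p q r u : GEntry) : ([p,q,r,u] : GWord).rotate 3 = [u,p,q,r] := by
  simp [List.rotate]

lemma L_adj (a b : ℕ) (s t : Bool) (hab : a ≠ b) (h h' : Bool) :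
    CWEquiv [(a,h,s),(a,!h,s),(b,h',t),(b,!h',t)] [] := by
  have hb : ∀ e ∈ ([(b,h',t),(b,!h',t)] : GWord), e.1 ≠ a := by
    intro e he; simp at he; rcases he with rfl | rfl <;> simpa using hab.symm
  refine cw_trans (cw_adj a h s _ hb) ?_
  exact cw_adj b h' t [] (by simp)

-- leaf 3: [x1,x3,x2,x4]
lemma L_alt1 (a b : ℕ) (s t : Bool) (hab : a ≠ b) :
    CWEquiv [(a,false,s),(b,false,t),(a,true,s),(b,true,t)] [] := by
  refine cw_trans (by simpa using cw_w [] [(a,true,s),(b,true,t)] a b s t : CWEquiv _ _) ?_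
  have h1 : CWEquiv ([(b,false,t)] ++ (a,false,s) :: (a,!false,s) :: [(b,true,t)])
      ([(b,false,t)] ++ [(b,true,t)]) := by
    refine cw_c1 _ _ a false s ?_
    intro e he; simp at he; rcases he with rfl | rfl <;> simpa using hab.symm
  simp only [Bool.not_false] at h1
  refine cw_trans h1 ?_
  exact cw_adj b false t [] (by simp)

-- leaf 5: [x1,x4,x2,x3]
lemma L_alt2 (a b : ℕ) (s t : Bool) (hab : a ≠ b) :
    CWEquiv [(a,false,s),(b,true,t),(a,true,s),(b,false,t)] [] := by
  refine cw_trans (cw_rot' 3 (rot3 _ _ _ _)) ?_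
  -- now [(b,false,t),(a,false,s),(b,true,t),(a,true,s)]
  refine cw_trans (by simpa using cw_w [] [(b,true,t),(a,true,s)] b a t s : CWEquiv _ _) ?_
  -- now [(a,false,s),(b,false,t),(b,true,t),(a,true,s)]
  have h1 : CWEquiv ([(a,false,s)] ++ (b,false,t) :: (b,!false,t) :: [(a,true,s)])
      ([(a,false,s)] ++ [(a,true,s)]) := by
    refine cw_c1 _ _ b false t ?_
    intro e he; simp at he; rcases he with rfl | rfl <;> simpa using hab
  simp only [Bool.not_false] at h1
  refine cw_trans h1 ?_
  exact cw_adj a false s [] (by simp)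

-- leaf 4: [x1,x3,x4,x2]
lemma L_alt3 (a b : ℕ) (s t : Bool) (hab : a ≠ b) :
    CWEquiv [(a,false,s),(b,false,t),(b,true,t),(a,true,s)] [] := by
  refine cw_trans (cw_rot' 3 (rot3 _ _ _ _)) ?_
  -- [(a,true,s),(a,false,s),(b,false,t),(b,true,t)]
  simpa using L_adj a b s t hab true false

-- leaf 6: [x1,x4,x3,x2]
lemma L_alt4 (a b : ℕ) (s t : Bool) (hab : a ≠ b) :
    CWEquiv [(a,false,s),(b,true,t),(b,false,t),(a,true,s)] [] := by
  refine cw_trans (cw_rot' 3 (rot3 _ _ _ _)) ?_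
  simpa using L_adj a b s t hab true true
lemma perm_pair {α : Type*} {g h u v : α} (hp : ([g,h] : List α).Perm [u,v]) :
    (g = u ∧ h = v) ∨ (g = v ∧ h = u) := by
  have hg : g ∈ [u, v] := hp.mem_iff.mp (by simp)
  simp at hg
  rcases hg with rfl | rfl
  · left
    have := hp.cons_inv
    simp [List.perm_singleton] at this
    exact ⟨rfl, this⟩
  · right
    have h2 : ([g, h] : List α).Perm (g :: [u]) := hp.trans (List.Perm.swap g u [])
    have := h2.cons_inv
    simp [List.perm_singleton] at this
    exact ⟨rfl, this⟩

lemma eq_two_of {α : Type*} {l : List α} {x y : α} (hl : l.length = 2) (hx : x ∈ l)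
    (hy : y ∈ l) (hxy : x ≠ y) : l = [x, y] ∨ l = [y, x] := by
  rcases l with _ | ⟨p, _ | ⟨q, _ | ⟨r, m⟩⟩⟩ <;> simp at hl
  simp at hx hy
  rcases hx with rfl | rfl <;> rcases hy with rfl | rfl <;> simp_all

lemma oneChord (a : ℕ) (s : Bool) (D : GWord)
    (hperm : D.Perm [(a,false,s),(a,true,s)]) : CWEquiv D [] := by
  have hl : D.length = 2 := by simpa using hperm.length_eq
  rcases D with _ | ⟨e1, D⟩; · simp at hl
  rcases D with _ | ⟨e2, D⟩; · simp at hl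
  rcases D with _ | ⟨e3, D⟩
  swap; · simp at hl
  rcases perm_pair hperm with ⟨rfl, rfl⟩ | ⟨rfl, rfl⟩
  · simpa using cw_adj a false s [] (by simp)
  · simpa using cw_adj a true s [] (by simp)

lemma twoChord (a b : ℕ) (s t : Bool) (hab : a ≠ b) (D : GWord)
    (hperm : D.Perm [(a,false,s),(a,true,s),(b,false,t),(b,true,t)]) : CWEquiv D [] := by
  set x1 : GEntry := (a,false,s)
  set x2 : GEntry := (a,true,s)
  set x3 : GEntry := (b,false,t)
  set x4 : GEntry := (b,true,t)
  have hx1 : x1 ∈ D := hperm.mem_iff.mpr (by simp)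
  obtain ⟨l1, l2, rfl⟩ := List.append_of_mem hx1
  have hrot : (l1 ++ x1 :: l2).rotate l1.length = x1 :: (l2 ++ l1) := by
    rw [List.rotate_eq_drop_append_take (by simp)]
    simp [List.drop_left, List.take_left]
  have hperm' : (x1 :: (l2 ++ l1)).Perm [x1, x2, x3, x4] :=
    (hrot ▸ List.rotate_perm (l1 ++ x1 :: l2) l1.length).trans hperm
  have htail : (l2 ++ l1).Perm [x2, x3, x4] := hperm'.cons_inv
  have hD : CWEquiv (l1 ++ x1 :: l2) (x1 :: (l2 ++ l1)) := cw_rot' _ hrot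
  refine cw_trans hD ?_
  have hl : (l2 ++ l1).length = 3 := by simpa using htail.length_eq
  rcases hfgh : l2 ++ l1 with _ | ⟨f, m⟩; · rw [hfgh] at hl; simp at hl
  rcases m with _ | ⟨g, m⟩; · rw [hfgh] at hl; simp at hl
  rcases m with _ | ⟨h2, m⟩; · rw [hfgh] at hl; simp at hl
  rcases m with _ | ⟨h3, m⟩
  swap; · rw [hfgh] at hl; simp at hl
  rw [hfgh] at htail
  have hf : f ∈ [x2, x3, x4] := htail.mem_iff.mp (by simp)
  simp only [List.mem_cons, List.mem_singleton, List.not_mem_nil, or_false] at hf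
  rcases hf with rfl | rfl | rfl
  · have h2p : ([g, h2] : GWord).Perm [x3, x4] := htail.cons_inv
    rcases perm_pair h2p with ⟨rfl, rfl⟩ | ⟨rfl, rfl⟩
    · simpa [x1, x2, x3, x4] using L_adj a b s t hab false false
    · simpa [x1, x2, x3, x4] using L_adj a b s t hab false true
  · have h2p : ([g, h2] : GWord).Perm [x2, x4] :=
      (htail.trans (List.Perm.swap x3 x2 [x4])).cons_inv
    rcases perm_pair h2p with ⟨rfl, rfl⟩ | ⟨rfl, rfl⟩
    · exact L_alt1 a b s t hab
    · exact L_alt3 a b s t hab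
  · have hsw : ([x2, x3, x4] : GWord).Perm (x4 :: [x2, x3]) :=
      ((List.Perm.swap x4 x3 []).cons x2).trans (List.Perm.swap x4 x2 [x3])
    have h2p : ([g, h2] : GWord).Perm [x2, x3] := (htail.trans hsw).cons_inv
    rcases perm_pair h2p with ⟨rfl, rfl⟩ | ⟨rfl, rfl⟩
    · exact L_alt2 a b s t hab
    · exact L_alt4 a b s t hab
/-- Every Gauss code with at most two chords can be
transformed into the empty code by a finite sequence of C1 and W moves. -/
theorem atMostTwoChords_CW_trivial (D : GWord) (hD : IsGaussCode D)
    (hcard : (chordSet D).ncard ≤ 2) :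
    CWEquiv D [] := by
  have hset : chordSet D = ↑(D.map Prod.fst).toFinset := by
    ext n
    simp only [chordSet, Set.mem_setOf_eq, Finset.coe_sort_coe, List.coe_toFinset,
      Set.mem_setOf_eq, List.mem_map, Finset.mem_coe, List.mem_toFinset]
  have hcard' : (D.map Prod.fst).toFinset.card ≤ 2 := by
    rwa [hset, Set.ncard_coe_finset] at hcard
  have hmemF : ∀ e ∈ D, e.1 ∈ (D.map Prod.fst).toFinset := by
    intro e he
    simp only [List.mem_toFinset, List.mem_map]
    exact ⟨e, he, rfl⟩
  have hchord : ∀ n : ℕ, n ∈ (D.map Prod.fst).toFinset → n ∈ chordSet D := by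
    intro n hn
    rw [hset]
    simpa using hn
  rcases hc : (D.map Prod.fst).toFinset.card with _ | _ | _ | k
  · -- no chords
    have : D.map Prod.fst = [] := by
      have := Finset.card_eq_zero.mp hc
      rcases hl : D.map Prod.fst with _ | ⟨n, m⟩
      · rfl
      · exfalso
        have : n ∈ (D.map Prod.fst).toFinset := by rw [hl]; simp
        rw [Finset.card_eq_zero.mp hc] at this
        simp at this
    have hD0 : D = [] := by simpa using congrArg List.length this
    rw [hD0]
    exact Relation.EqvGen.refl []
  · -- one chord
    obtain ⟨a, hFa⟩ := Finset.card_eq_one.mp hc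
    obtain ⟨hcount, s, hf, ht⟩ := hD a (hchord a (by rw [hFa]; simp))
    have hall : ∀ e ∈ D, (fun e : GEntry => e.1 == a) e := by
      intro e he
      have := hmemF e he
      rw [hFa] at this
      simpa using this
    have hlen : D.length = 2 := by
      rw [← List.countP_eq_length.mpr hall]; exact hcount
    have hne : ((a, false, s) : GEntry) ≠ (a, true, s) := by simp
    rcases eq_two_of hlen hf ht hne with hE | hE
    · rw [hE]; exact oneChord a s _ (List.Perm.refl _)
    · rw [hE]; exact oneChord a s _ (List.Perm.swap _ _ _)
  · -- two chords
    obtain ⟨a, b, hab, hFab⟩ := Finset.card_eq_two.mp hc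
    obtain ⟨hca, s, hfa, hta⟩ := hD a (hchord a (by rw [hFab]; simp))
    obtain ⟨hcb, t, hfb, htb⟩ := hD b (hchord b (by rw [hFab]; simp))
    have hmem : ∀ e ∈ D, e.1 = a ∨ e.1 = b := by
      intro e he
      have := hmemF e he
      rw [hFab] at this
      simpa using this
    set pa : GEntry → Bool := fun e => e.1 == a with hpa_def
    set pb : GEntry → Bool := fun e => e.1 == b with hpb_def
    have hla : (D.filter pa).length = 2 := by
      rw [← List.countP_eq_length_filter]; exact hca
    have hlb : (D.filter pb).length = 2 := by
      rw [← List.countP_eq_length_filter]; exact hcb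
    have hfa1 : ((a, false, s) : GEntry) ∈ D.filter pa := List.mem_filter.mpr ⟨hfa, by simp [hpa_def]⟩
    have hfa2 : ((a, true, s) : GEntry) ∈ D.filter pa := List.mem_filter.mpr ⟨hta, by simp [hpa_def]⟩
    have hfb1 : ((b, false, t) : GEntry) ∈ D.filter pb := List.mem_filter.mpr ⟨hfb, by simp [hpb_def]⟩
    have hfb2 : ((b, true, t) : GEntry) ∈ D.filter pb := List.mem_filter.mpr ⟨htb, by simp [hpb_def]⟩
    have hPa : (D.filter pa).Perm [(a, false, s), (a, true, s)] := by
      rcases eq_two_of hla hfa1 hfa2 (by simp) with hE | hE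
      · rw [hE]
      · rw [hE]; exact List.Perm.swap _ _ _
    have hPb : (D.filter pb).Perm [(b, false, t), (b, true, t)] := by
      rcases eq_two_of hlb hfb1 hfb2 (by simp) with hE | hE
      · rw [hE]
      · rw [hE]; exact List.Perm.swap _ _ _
    have hfilters : D.filter (fun e => !pa e) = D.filter pb := by
      apply List.filter_congr
      intro e he
      rcases hmem e he with h1 | h1 <;> simp [hpa_def, hpb_def, h1, hab, Ne.symm hab]
    have hsplit : D.Perm (D.filter pa ++ D.filter pb) := by
      rw [← hfilters]
      exact (List.filter_append_perm pa D).symm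
    have hperm : D.Perm [(a, false, s), (a, true, s), (b, false, t), (b, true, t)] :=
      hsplit.trans (hPa.append hPb)
    exact twoChord a b s t hab D hperm
  · omega
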